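/- Let (σ, α) be a combinatorial map on a finite set H with |H| = 2n (n ≥ 1), rooted at r, with a left-connected orientation (I, O), and let τ be the permutation of H produced by the unfolding construction. Then: (a) the permutations τ and α generate a subgroup acting transitively on H; (b) τ has exactly n+1 orbits on H, so that (τ, α) is a plane tree with n edges; (c) every orbit of τ on H contains at most one element of I, so that (I,O) is the root-to-leaves orientation of this tree. -/

import Mathlib

/-- First-return restriction of `f` to `S`, viewed as a map on the whole set
(acting as the identity outside `S`). -/
noncomputable def restrictFun {X : Type*} (f : X → X) (S : Set X) (x : X) : X := by
  classical
  exact if hx : x ∈ S ∧ ∃ k : ℕ, 0 < k ∧ f^[k] x ∈ S then f^[Nat.find hx.2] x else x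

/-- `(σ,α)` is a combinatorial map. -/
def IsCombMap {X : Type*} (σ α : Equiv.Perm X) : Prop :=
  (∀ h, α h ≠ h) ∧ (∀ h, α (α h) = h) ∧
    ∀ x y : X, ∃ g ∈ Subgroup.closure ({σ, α} : Set (Equiv.Perm X)), g x = y

/-- The backward function of an orientation with ingoing set `I`. -/
noncomputable def backward {X : Type*} (σ α : Equiv.Perm X) (I : Set X) (h : X) : X := by
  classical
  exact if h ∈ I then σ (α h) else σ h

/-- The number of orbits of `f` on `S` (forward orbits inside `S`). -/
noncomputable def numOrbitsOn {X : Type*} (f : X → X) (S : Set X) : ℕ :=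
  ((fun x => {y | y ∈ S ∧ ∃ k : ℕ, f^[k] x = y}) '' S).ncard

/-- `H' = H ⊕ Bool`, where `i = Sum.inr true` and `o = Sum.inr false` are the two new
half-edges. The extended edge-involution `α'` acts as `α` on `H` and swaps `i` and `o`. -/
def alphaExt {H : Type*} (α : Equiv.Perm H) : Equiv.Perm (H ⊕ Bool) :=
  Equiv.sumCongr α (Equiv.swap true false)

/-- The extended vertex-permutation `σ'` of the unfolding construction: `σ' i = r`,
`σ' (σ⁻¹ r) = i`, `σ' o = o` and `σ' = σ` elsewhere. -/
noncomputable def sigmaExt {H : Type*} (σ : Equiv.Perm H) (r : H) :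
    Equiv.Perm (H ⊕ Bool) := by
  classical
  exact Equiv.sumCongr σ (1 : Equiv.Perm Bool) *
    Equiv.swap (Sum.inr true) (Sum.inl (σ⁻¹ r))

set_option linter.unusedSectionVars false

namespace Unfold

open Equiv Equiv.Perm

lemma restrictFun_of_neg {X : Type*} (f : X → X) (S : Set X) {x : X}
    (hx : ¬ (x ∈ S ∧ ∃ k : ℕ, 0 < k ∧ f^[k] x ∈ S)) : restrictFun f S x = x := by
  unfold restrictFun
  rw [dif_neg hx]

lemma restrictFun_spec {X : Type*} (f : X → X) (S : Set X) {x : X}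
    (hC : x ∈ S ∧ ∃ k : ℕ, 0 < k ∧ f^[k] x ∈ S) :
    ∃ k, 0 < k ∧ f^[k] x = restrictFun f S x ∧ f^[k] x ∈ S ∧
      ∀ j, 0 < j → j < k → f^[j] x ∉ S := by
  classical
  unfold restrictFun
  rw [dif_pos hC]
  refine ⟨_, ?_, rfl, ?_, ?_⟩
  · exact (Nat.find_spec hC.2).1
  · exact (Nat.find_spec hC.2).2
  · intro j hj hjk hmem
    exact (Nat.find_min hC.2 hjk) ⟨hj, hmem⟩

lemma exists_pos_iterate {X : Type*} [Fintype X] (F : Equiv.Perm X) (x : X) :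
    ∃ k, 0 < k ∧ (⇑F)^[k] x = x := by
  refine ⟨orderOf F, orderOf_pos F, ?_⟩
  rw [← Equiv.Perm.coe_pow, pow_orderOf_eq_one]
  rfl

lemma iterate_fixed_eq {X : Type*} (f : X → X) (hf : Function.Injective f) (a : X)
    (ha : f a = a) : ∀ k x, f^[k] x = a → x = a := by
  intro k
  induction k with
  | zero => intro x h; simpa using h
  | succ k ih =>
      intro x h
      rw [Function.iterate_succ_apply'] at h
      exact ih x (hf (h.trans ha.symm))

section Nu

variable {X : Type*} [Fintype X] (F : Equiv.Perm X) (S : Set X)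
variable (hreach : ∀ x : X, ∃ k : ℕ, (⇑F)^[k] x ∈ S)

open Classical in
noncomputable def nu (x : X) : X := (⇑F)^[Nat.find (hreach x)] x

lemma nu_mem (x : X) : nu F S hreach x ∈ S := by
  classical
  unfold nu
  exact Nat.find_spec (hreach x)

lemma nu_spec (x : X) : ∃ k : ℕ, (⇑F)^[k] x = nu F S hreach x := by
  classical
  unfold nu
  exact ⟨_, rfl⟩

lemma nu_of_mem {x : X} (hx : x ∈ S) : nu F S hreach x = x := by
  classical
  unfold nu
  have h0 : Nat.find (hreach x) = 0 := by
    rw [Nat.find_eq_zero]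
    simpa using hx
  rw [h0]
  rfl

open Classical in
lemma nu_find_step {x : X} (hx : x ∉ S) :
    Nat.find (hreach (F x)) + 1 = Nat.find (hreach x) := by
  classical
  have hk := Nat.find_spec (hreach x)
  have hk0 : Nat.find (hreach x) ≠ 0 := by
    intro h
    rw [h] at hk
    exact hx (by simpa using hk)
  have hfind : Nat.find (hreach (F x)) = Nat.find (hreach x) - 1 := by
    rw [Nat.find_eq_iff]
    constructor
    · rw [← Function.iterate_succ_apply, Nat.succ_eq_add_one,
        Nat.sub_add_cancel (Nat.one_le_iff_ne_zero.mpr hk0)]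
      exact hk
    · intro j hj hmem
      rw [← Function.iterate_succ_apply] at hmem
      exact Nat.find_min (hreach x) (by omega) hmem
  omega

lemma nu_step {x : X} (hx : x ∉ S) : nu F S hreach (F x) = nu F S hreach x := by
  classical
  unfold nu
  have h := nu_find_step F S hreach hx
  rw [← h, ← Function.iterate_succ_apply]

variable (P : Equiv.Perm X)

lemma inv_fix (hP1 : ∀ x, x ∉ S → P x = x) {x : X} (hx : x ∉ S) : P⁻¹ x = x := by
  have h := hP1 x hx
  have h2 : P⁻¹ (P x) = x := P.symm_apply_apply x
  rw [h] at h2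
  exact h2

lemma nu_t (hP1 : ∀ x, x ∉ S → P x = x)
    (hP2 : ∀ x ∈ S, ∃ k, 0 < k ∧ (⇑F)^[k] x = P x ∧ P x ∈ S ∧
      ∀ j, 0 < j → j < k → (⇑F)^[j] x ∉ S) (x : X) : nu F S hreach ((F * P⁻¹) x) = nu F S hreach x := by
  classical
  by_cases hx : x ∈ S
  · have hz : P⁻¹ x ∈ S := by
      by_contra hzs
      have h1 := hP1 _ hzs
      rw [show P (P⁻¹ x) = x from P.apply_symm_apply x] at h1
      rw [← h1] at hzs
      exact hzs hx
    obtain ⟨k, hk0, hkeq, _, hkmin⟩ := hP2 _ hz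
    have hPz : P (P⁻¹ x) = x := P.apply_symm_apply x
    rw [hPz] at hkeq
    have seg : ∀ d j, j + d = k → 0 < j →
        nu F S hreach ((⇑F)^[j] (P⁻¹ x)) = nu F S hreach x := by
      intro d
      induction d with
      | zero =>
          intro j hj _
          have : j = k := by omega
          subst this
          rw [hkeq]
      | succ d ih =>
          intro j hj hj0
          have hjk : j < k := by omega
          have hnot : (⇑F)^[j] (P⁻¹ x) ∉ S := hkmin j hj0 hjk
          have hstep := nu_step F S hreach hnot
          rw [← Function.iterate_succ_apply' (⇑F) j (P⁻¹ x)] at hstep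
          rw [← hstep]
          exact ih (j + 1) (by omega) (by omega)
    have h1 := seg (k - 1) 1 (by omega) one_pos
    simp only [Function.iterate_one] at h1
    calc nu F S hreach ((F * P⁻¹) x) = nu F S hreach (F (P⁻¹ x)) := rfl
      _ = nu F S hreach x := h1
  · have hz : P⁻¹ x = x := inv_fix S P hP1 hx
    have : (F * P⁻¹) x = F x := by
      simp [Equiv.Perm.mul_apply, hz]
    rw [this]
    exact nu_step F S hreach hx

lemma nu_sameCycle (hP1 : ∀ x, x ∉ S → P x = x) (x : X) : (F * P⁻¹).SameCycle x (nu F S hreach x) := by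
  classical
  suffices h : ∀ m, ∀ x : X, Nat.find (hreach x) ≤ m →
      (F * P⁻¹).SameCycle x (nu F S hreach x) from h _ x le_rfl
  intro m
  induction m with
  | zero =>
      intro x hx
      have h0 : Nat.find (hreach x) = 0 := by omega
      have hmem : x ∈ S := by
        have := Nat.find_spec (hreach x)
        rw [h0] at this
        simpa using this
      rw [nu_of_mem F S hreach hmem]
  | succ m ih =>
      intro x hx
      by_cases hxS : x ∈ S
      · rw [nu_of_mem F S hreach hxS]
      · have hfs := nu_find_step F S hreach hxS
        have h2 := ih (F x) (by omega)
        rw [nu_step F S hreach hxS] at h2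
        have h1 : (F * P⁻¹).SameCycle x (F x) := by
          refine ⟨1, ?_⟩
          have hz : P⁻¹ x = x := inv_fix S P hP1 hxS
          simp [Equiv.Perm.mul_apply, hz]
        exact h1.trans h2

lemma nu_invariant (hP1 : ∀ x, x ∉ S → P x = x)
    (hP2 : ∀ x ∈ S, ∃ k, 0 < k ∧ (⇑F)^[k] x = P x ∧ P x ∈ S ∧
      ∀ j, 0 < j → j < k → (⇑F)^[j] x ∉ S) {x y : X} (h : (F * P⁻¹).SameCycle x y) :
    nu F S hreach x = nu F S hreach y := by
  classical
  obtain ⟨m, _, he⟩ := h.exists_pow_eq'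
  have hiter : ∀ m : ℕ, nu F S hreach ((⇑(F * P⁻¹))^[m] x) = nu F S hreach x := by
    intro m
    induction m with
    | zero => rfl
    | succ m ih =>
        rw [Function.iterate_succ_apply']
        rw [nu_t F S hreach P hP1 hP2]
        exact ih
  have := hiter m
  rw [← Equiv.Perm.coe_pow] at this
  rw [he] at this
  exact this.symm

end Nu



lemma sigmaExt_inl {H : Type*} (σ : Equiv.Perm H) (r : H) {h : H} (hh : h ≠ σ⁻¹ r) :
    sigmaExt σ r (Sum.inl h) = Sum.inl (σ h) := by
  classical
  unfold sigmaExt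
  rw [Equiv.Perm.mul_apply, Equiv.swap_apply_of_ne_of_ne (by simp) (by simpa using hh)]
  simp

lemma sigmaExt_inv_root {H : Type*} (σ : Equiv.Perm H) (r : H) :
    sigmaExt σ r (Sum.inl (σ⁻¹ r)) = Sum.inr true := by
  classical
  unfold sigmaExt
  rw [Equiv.Perm.mul_apply, Equiv.swap_apply_right]
  simp

lemma sigmaExt_i {H : Type*} (σ : Equiv.Perm H) (r : H) :
    sigmaExt σ r (Sum.inr true) = Sum.inl r := by
  classical
  unfold sigmaExt
  rw [Equiv.Perm.mul_apply, Equiv.swap_apply_left]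
  simp

lemma sigmaExt_o {H : Type*} (σ : Equiv.Perm H) (r : H) :
    sigmaExt σ r (Sum.inr false) = Sum.inr false := by
  classical
  unfold sigmaExt
  rw [Equiv.Perm.mul_apply, Equiv.swap_apply_of_ne_of_ne (by simp) (by simp)]
  simp

lemma sameCycle_down {X Y : Type*} (T : Equiv.Perm Y) (t : Equiv.Perm X) (g : X → Y)
    (hg : Function.Injective g)
    (hstep : ∀ x : X, ∃ k, 0 < k ∧ (⇑T)^[k] (g x) = g (t x) ∧
      ∀ j, 0 < j → j < k → (⇑T)^[j] (g x) ∉ Set.range g) :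
    ∀ n : ℕ, ∀ x y : X, (⇑T)^[n] (g x) = g y → t.SameCycle x y := by
  intro n
  induction n using Nat.strong_induction_on with
  | _ n ih =>
    intro x y he
    rcases Nat.eq_zero_or_pos n with rfl | hn
    · simp only [Function.iterate_zero, id_eq] at he
      exact ⟨0, by simpa using hg he⟩
    · obtain ⟨k, hk0, hke, hkmin⟩ := hstep x
      rcases lt_or_ge n k with hnk | hnk
      · exact absurd ⟨y, he.symm⟩ (hkmin n hn hnk)
      · have h2 : (⇑T)^[n - k] (g (t x)) = g y := by
          rw [← hke, ← Function.iterate_add_apply, show n - k + k = n by omega]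
          exact he
        exact (show t.SameCycle x (t x) from ⟨1, by simp⟩).trans
          (ih (n - k) (by omega) (t x) y h2)

lemma sameCycle_up {X Y : Type*} [Finite X] (T : Equiv.Perm Y) (t : Equiv.Perm X) (g : X → Y)
    (hstep : ∀ x : X, ∃ k, 0 < k ∧ (⇑T)^[k] (g x) = g (t x) ∧
      ∀ j, 0 < j → j < k → (⇑T)^[j] (g x) ∉ Set.range g) :
    ∀ x y : X, t.SameCycle x y → T.SameCycle (g x) (g y) := by
  have key : ∀ (m : ℕ) (x : X), T.SameCycle (g x) (g ((⇑t)^[m] x)) := by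
    intro m x
    induction m with
    | zero => exact ⟨0, by simp⟩
    | succ m ih =>
        rw [Function.iterate_succ_apply']
        refine ih.trans ?_
        obtain ⟨k, -, hke, -⟩ := hstep ((⇑t)^[m] x)
        exact ⟨(k : ℤ), by rw [zpow_natCast]; exact hke⟩
  intro x y hxy
  obtain ⟨m, -, he⟩ := hxy.exists_pow_eq'
  have he' : (⇑t)^[m] x = y := he
  rw [← he']
  exact key m x

end Unfold

/-- for a left-connected orientation `(I,O)` on a map with `2n`
half-edges, the permutation `τ = (σ'∘π_∘⁻¹)_{|H}` of the unfolding construction, where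
`π_∘ = σ'_{|I'}`, is a plane tree with `n` edges ((a) transitivity, (b) `n+1` orbits),
and `(I,O)` is its root-to-leaves orientation ((c) each `τ`-orbit contains at most one
ingoing half-edge). -/
theorem unfolded_tree_is_plane_tree {H : Type*} [Fintype H] (n : ℕ) (hn : 1 ≤ n)
    (hcard : Fintype.card H = 2 * n)
    (σ α : Equiv.Perm H) (hmap : IsCombMap σ α) (r : H) (I O : Set H)
    (hpart : I ∪ O = Set.univ) (hdisj : I ∩ O = ∅) (hIO : α '' I = O)
    (hlc : ∀ h : H, ∃ q : ℕ, 0 < q ∧ (backward σ α I)^[q] h = r)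
    (πo : Equiv.Perm (H ⊕ Bool))
    (hπo : ⇑πo = restrictFun (⇑(sigmaExt σ r))
      (Sum.inl '' I ∪ {Sum.inr true}))
    (τ : Equiv.Perm H)
    (hτ : ∀ h : H, (Sum.inl (τ h) : H ⊕ Bool) =
      restrictFun (⇑(sigmaExt σ r * πo⁻¹))
        (Set.range (Sum.inl : H → H ⊕ Bool)) (Sum.inl h)) :
    (∀ x y : H, ∃ g ∈ Subgroup.closure ({τ, α} : Set (Equiv.Perm H)), g x = y) ∧
    numOrbitsOn (⇑τ) Set.univ = n + 1 ∧
    (∀ x y : H, x ∈ I → y ∈ I → τ.SameCycle x y → x = y) := by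
  classical
  have hIdisj : ∀ x : H, x ∈ I → x ∉ O := by
    intro x hx hxO
    have hmem : x ∈ I ∩ O := ⟨hx, hxO⟩
    rw [hdisj] at hmem
    exact hmem
  have hαI : ∀ x : H, x ∈ I → α x ∉ I := by
    intro x hx hc
    have h1 : α x ∈ O := by rw [← hIO]; exact Set.mem_image_of_mem _ hx
    exact hIdisj _ hc h1
  have backward_mem : ∀ {h : H}, h ∈ I → backward σ α I h = σ (α h) := by
    intro h hh; unfold backward; rw [if_pos hh]
  have backward_not_mem : ∀ {h : H}, h ∉ I → backward σ α I h = σ h := by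
    intro h hh; unfold backward; rw [if_neg hh]
  have hnH : Nonempty H := by
    rw [← Fintype.card_pos_iff, hcard]; omega
  obtain ⟨h₀⟩ := hnH
  have hsr : σ⁻¹ r ∉ I := by
    obtain ⟨q, hq0, hq⟩ := hlc h₀
    obtain ⟨q', rfl⟩ : ∃ q', q = q' + 1 := ⟨q - 1, by omega⟩
    rw [Function.iterate_succ_apply'] at hq
    set z := (backward σ α I)^[q'] h₀ with hz
    by_cases hzI : z ∈ I
    · rw [backward_mem hzI] at hq
      have hαz : α z = σ⁻¹ r := by rw [← hq]; simp
      rw [← hαz]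
      exact hαI _ hzI
    · rw [backward_not_mem hzI] at hq
      have hzz : z = σ⁻¹ r := by rw [← hq]; simp
      rw [← hzz]
      exact hzI
  -- sets
  set Iset : Set (H ⊕ Bool) := Sum.inl '' I ∪ {Sum.inr true} with hIsetdef
  set S' : Set (H ⊕ Bool) := Iset ∪ {Sum.inr false} with hS'def
  have hinl_Iset : ∀ x : H, Sum.inl x ∈ Iset ↔ x ∈ I := by
    intro x; simp [hIsetdef]
  have hi_Iset : (Sum.inr true : H ⊕ Bool) ∈ Iset := by simp [hIsetdef]
  have ho_Iset : (Sum.inr false : H ⊕ Bool) ∉ Iset := by simp [hIsetdef]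
  have hinl_S' : ∀ x : H, Sum.inl x ∈ S' ↔ x ∈ I := by
    intro x; simp [hS'def, hIsetdef]
  have hi_S' : (Sum.inr true : H ⊕ Bool) ∈ S' := Set.mem_union_left _ hi_Iset
  have ho_S' : (Sum.inr false : H ⊕ Bool) ∈ S' := Set.mem_union_right _ rfl
  have hofix : ∀ (k : ℕ) (z : H ⊕ Bool),
      (⇑(sigmaExt σ r))^[k] z = Sum.inr false → z = Sum.inr false :=
    Unfold.iterate_fixed_eq _ (sigmaExt σ r).injective _ (Unfold.sigmaExt_o σ r)
  have hπo' : ∀ z, πo z = restrictFun (⇑(sigmaExt σ r)) Iset z := fun z => congrFun hπo z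
  have p_not : ∀ z, z ∉ Iset → πo z = z := by
    intro z hz
    rw [hπo' z]
    exact Unfold.restrictFun_of_neg _ _ (fun hc => hz hc.1)
  have pinv_not : ∀ z, z ∉ Iset → πo⁻¹ z = z := by
    intro z hz
    have h1 := p_not z hz
    have h2 : πo⁻¹ (πo z) = z := πo.symm_apply_apply z
    rw [h1] at h2
    exact h2
  have hP1' : ∀ z, z ∉ S' → πo z = z := fun z hz =>
    p_not z (fun hc => hz (Set.mem_union_left _ hc))
  have hP2' : ∀ z ∈ S', ∃ k, 0 < k ∧ (⇑(sigmaExt σ r))^[k] z = πo z ∧ πo z ∈ S' ∧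
      ∀ j, 0 < j → j < k → (⇑(sigmaExt σ r))^[j] z ∉ S' := by
    intro z hz
    by_cases hzI : z ∈ Iset
    · have hC : z ∈ Iset ∧ ∃ k : ℕ, 0 < k ∧ (⇑(sigmaExt σ r))^[k] z ∈ Iset := by
        refine ⟨hzI, ?_⟩
        obtain ⟨k, hk0, hk⟩ := Unfold.exists_pos_iterate (sigmaExt σ r) z
        exact ⟨k, hk0, by rw [hk]; exact hzI⟩
      obtain ⟨k, hk0, hkeq, hkS, hkmin⟩ := Unfold.restrictFun_spec (⇑(sigmaExt σ r)) Iset hC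
      rw [← hπo' z] at hkeq
      refine ⟨k, hk0, hkeq, ?_, ?_⟩
      · rw [← hkeq]
        exact Set.mem_union_left _ hkS
      · intro j hj0 hjk hmem
        rcases hmem with hmem | hmem
        · exact hkmin j hj0 hjk hmem
        · have hzo := hofix j z hmem
          rw [hzo] at hzI
          exact ho_Iset hzI
    · have hzo : z = Sum.inr false := by
        rcases hz with h | h
        · exact absurd h hzI
        · exact h
      subst hzo
      refine ⟨1, one_pos, ?_, ?_, by intro j h1 h2; omega⟩
      · rw [Function.iterate_one, Unfold.sigmaExt_o, p_not _ ho_Iset]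
      · rw [p_not _ ho_Iset]; exact ho_S'
  -- reachability
  have hconv : ∀ (k : ℕ) (h : H), (∀ j, j < k → (⇑σ)^[j] h ≠ σ⁻¹ r) →
      (⇑(sigmaExt σ r))^[k] (Sum.inl h) = Sum.inl ((⇑σ)^[k] h) := by
    intro k
    induction k with
    | zero => intro h _; rfl
    | succ k ih =>
        intro h hj
        rw [Function.iterate_succ_apply', Function.iterate_succ_apply',
          ih h (fun j hjk => hj j (by omega))]
        exact Unfold.sigmaExt_inl σ r (hj k (by omega))
  have hexists : ∀ h : H, ∃ k : ℕ, (⇑σ)^[k] h ∈ I ∨ (⇑σ)^[k] h = σ⁻¹ r := by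
    intro h
    by_contra hcon
    push_neg at hcon
    have hβ : ∀ q : ℕ, (backward σ α I)^[q] h = (⇑σ)^[q] h := by
      intro q
      induction q with
      | zero => rfl
      | succ q ih =>
          rw [Function.iterate_succ_apply', Function.iterate_succ_apply', ih]
          exact backward_not_mem (hcon q).1
    obtain ⟨q, hq0, hq⟩ := hlc h
    rw [hβ] at hq
    obtain ⟨q', rfl⟩ : ∃ q', q = q' + 1 := ⟨q - 1, by omega⟩
    rw [Function.iterate_succ_apply'] at hq
    exact (hcon q').2 (by rw [← hq]; simp)
  have hreach : ∀ z : H ⊕ Bool, ∃ k : ℕ, (⇑(sigmaExt σ r))^[k] z ∈ S' := by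
    rintro (h | b)
    · have hex := hexists h
      have hne : ∀ j, j < Nat.find hex → (⇑σ)^[j] h ≠ σ⁻¹ r := by
        intro j hj heq
        exact Nat.find_min hex hj (Or.inr heq)
      have hcv := hconv (Nat.find hex) h hne
      rcases Nat.find_spec hex with hI | hroot
      · exact ⟨Nat.find hex, by
          rw [hcv]
          exact Set.mem_union_left _ ((hinl_Iset _).2 hI)⟩
      · refine ⟨Nat.find hex + 1, ?_⟩
        rw [Function.iterate_succ_apply', hcv, hroot, Unfold.sigmaExt_inv_root]
        exact hi_S'
    · cases b
      · exact ⟨0, ho_S'⟩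
      · exact ⟨0, hi_S'⟩
  -- nu machinery
  have hnus := Unfold.nu_sameCycle (sigmaExt σ r) S' hreach πo hP1'
  have hninv : ∀ {x y : H ⊕ Bool}, (sigmaExt σ r * πo⁻¹).SameCycle x y →
      Unfold.nu (sigmaExt σ r) S' hreach x = Unfold.nu (sigmaExt σ r) S' hreach y :=
    fun h => Unfold.nu_invariant (sigmaExt σ r) S' hreach πo hP1' hP2' h
  -- tau step
  have hstep : ∀ x : H, ∃ k, 0 < k ∧
      (⇑(sigmaExt σ r * πo⁻¹))^[k] (Sum.inl x) = Sum.inl (τ x) ∧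
      ∀ j, 0 < j → j < k →
        (⇑(sigmaExt σ r * πo⁻¹))^[j] (Sum.inl x) ∉ Set.range (Sum.inl : H → H ⊕ Bool) := by
    intro x
    have hC : (Sum.inl x : H ⊕ Bool) ∈ Set.range (Sum.inl : H → H ⊕ Bool) ∧
        ∃ k : ℕ, 0 < k ∧ (⇑(sigmaExt σ r * πo⁻¹))^[k] (Sum.inl x) ∈
          Set.range (Sum.inl : H → H ⊕ Bool) := by
      refine ⟨⟨x, rfl⟩, ?_⟩
      obtain ⟨k, hk0, hk⟩ := Unfold.exists_pos_iterate (sigmaExt σ r * πo⁻¹) (Sum.inl x)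
      exact ⟨k, hk0, by rw [hk]; exact ⟨x, rfl⟩⟩
    obtain ⟨k, hk0, hkeq, hkS, hkmin⟩ := Unfold.restrictFun_spec _ _ hC
    rw [← hτ x] at hkeq
    exact ⟨k, hk0, hkeq, hkmin⟩
  have hdown : ∀ x y : H,
      (sigmaExt σ r * πo⁻¹).SameCycle (Sum.inl x) (Sum.inl y) → τ.SameCycle x y := by
    intro x y hxy
    obtain ⟨m, -, he⟩ := hxy.exists_pow_eq'
    exact Unfold.sameCycle_down _ τ Sum.inl Sum.inl_injective hstep m x y he
  have hup : ∀ x y : H, τ.SameCycle x y →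
      (sigmaExt σ r * πo⁻¹).SameCycle (Sum.inl x) (Sum.inl y) :=
    Unfold.sameCycle_up _ τ Sum.inl hstep
  -- key formula
  have hF1 : ∀ h : H, h ∉ I → h ≠ σ⁻¹ r → τ h = σ h := by
    intro h hI hne
    obtain ⟨k, hk0, hkeq, hkmin⟩ := hstep h
    have h1 : (⇑(sigmaExt σ r * πo⁻¹))^[1] (Sum.inl h) = Sum.inl (σ h) := by
      rw [Function.iterate_one, Equiv.Perm.mul_apply,
        pinv_not _ (fun hc => hI ((hinl_Iset h).1 hc))]
      exact Unfold.sigmaExt_inl σ r hne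
    rcases Nat.lt_or_ge 1 k with hk1 | hk1
    · exact absurd ⟨σ h, h1.symm⟩ (hkmin 1 one_pos hk1)
    · have hkk : k = 1 := by omega
      subst hkk
      rw [h1] at hkeq
      exact (Sum.inl_injective hkeq).symm
  have hroot' : (sigmaExt σ r * πo⁻¹) (Sum.inl (σ⁻¹ r)) = Sum.inr true := by
    rw [Equiv.Perm.mul_apply, pinv_not _ (fun hc => hsr ((hinl_Iset _).1 hc))]
    exact Unfold.sigmaExt_inv_root σ r
  -- classifier
  set c : H → H := fun h =>
    Sum.elim id (fun _ => σ⁻¹ r) (Unfold.nu (sigmaExt σ r) S' hreach (Sum.inl h)) with hcdef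
  have c1 : ∀ h : H, c h ∈ I ∨ c h = σ⁻¹ r := by
    intro h
    have hm := Unfold.nu_mem (sigmaExt σ r) S' hreach (Sum.inl h)
    rcases (Set.mem_union _ _ _).1 hm with hm | hm
    · rcases (Set.mem_union _ _ _).1 hm with hm | hm
      · obtain ⟨y, hyI, hy⟩ := hm
        left
        have hch : c h = y := by simp only [hcdef]; rw [← hy]; rfl
        rw [hch]; exact hyI
      · right
        simp only [hcdef]; rw [Set.eq_of_mem_singleton hm]; rfl
    · right
      simp only [hcdef]; rw [Set.eq_of_mem_singleton hm]; rfl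
  have c2 : ∀ h : H, τ.SameCycle h (c h) := by
    intro h
    have hsc := hnus (Sum.inl h)
    rcases hval : Unfold.nu (sigmaExt σ r) S' hreach (Sum.inl h) with y | b
    · have hch : c h = y := by simp only [hcdef]; rw [hval]; rfl
      rw [hval] at hsc
      rw [hch]
      exact hdown h y hsc
    · cases b
      · exfalso
        obtain ⟨k, hk⟩ := Unfold.nu_spec (sigmaExt σ r) S' hreach (Sum.inl h)
        rw [hval] at hk
        exact (by simp : (Sum.inl h : H ⊕ Bool) ≠ Sum.inr false) (hofix k _ hk)
      · have hch : c h = σ⁻¹ r := by simp only [hcdef]; rw [hval]; rfl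
        rw [hval] at hsc
        rw [hch]
        have h2 : (sigmaExt σ r * πo⁻¹).SameCycle (Sum.inl (σ⁻¹ r)) (Sum.inr true) :=
          ⟨1, by simpa using hroot'⟩
        exact hdown h _ (hsc.trans h2.symm)
  have c3 : ∀ x y : H, τ.SameCycle x y → c x = c y := by
    intro x y hxy
    have hinv := hninv (hup x y hxy)
    simp only [hcdef]
    rw [hinv]
  have c4 : ∀ x : H, x ∈ I → c x = x := by
    intro x hx
    have hm := Unfold.nu_of_mem (sigmaExt σ r) S' hreach ((hinl_S' x).2 hx)
    simp only [hcdef]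
    rw [hm]
    rfl
  have c5 : c (σ⁻¹ r) = σ⁻¹ r := by
    have hnot : (Sum.inl (σ⁻¹ r) : H ⊕ Bool) ∉ S' := by
      intro hc
      exact hsr ((hinl_S' _).1 hc)
    have h1 := Unfold.nu_step (sigmaExt σ r) S' hreach hnot
    rw [Unfold.sigmaExt_inv_root] at h1
    have h2 := Unfold.nu_of_mem (sigmaExt σ r) S' hreach hi_S'
    simp only [hcdef]
    rw [← h1, h2]
    rfl
  refine ⟨?_, ?_, ?_⟩
  · -- (a) transitivity
    have hτmem : τ ∈ Subgroup.closure ({τ, α} : Set (Equiv.Perm H)) :=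
      Subgroup.subset_closure (Set.mem_insert _ _)
    have hαmem : α ∈ Subgroup.closure ({τ, α} : Set (Equiv.Perm H)) :=
      Subgroup.subset_closure (Set.mem_insert_of_mem _ rfl)
    set R : H → H → Prop := fun x y =>
      ∃ g ∈ Subgroup.closure ({τ, α} : Set (Equiv.Perm H)), g x = y with hRdef
    have Rrefl : ∀ x, R x x := fun x => ⟨1, one_mem _, rfl⟩
    have Rtrans : ∀ {x y z}, R x y → R y z → R x z := by
      rintro x y z ⟨g, hg, rfl⟩ ⟨g', hg', rfl⟩
      exact ⟨g' * g, mul_mem hg' hg, by rw [Equiv.Perm.mul_apply]⟩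
    have Rsymm : ∀ {x y}, R x y → R y x := by
      rintro x y ⟨g, hg, rfl⟩
      exact ⟨g⁻¹, inv_mem hg, g.symm_apply_apply x⟩
    have Rτ : ∀ x, R x (τ x) := fun x => ⟨τ, hτmem, rfl⟩
    have Rα : ∀ x, R x (α x) := fun x => ⟨α, hαmem, rfl⟩
    have key : ∀ q : ℕ, ∀ h : H, (backward σ α I)^[q + 1] h = r → R h (σ⁻¹ r) := by
      intro q
      induction q with
      | zero =>
          intro h hq
          rw [Function.iterate_one] at hq
          by_cases hI : h ∈ I
          · rw [backward_mem hI] at hq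
            have hh : α h = σ⁻¹ r := by rw [← hq]; simp
            rw [← hh]; exact Rα h
          · rw [backward_not_mem hI] at hq
            have hh : h = σ⁻¹ r := by rw [← hq]; simp
            exact hh ▸ Rrefl h
      | succ q ih =>
          intro h hq
          rw [Function.iterate_succ_apply] at hq
          have hbh := ih (backward σ α I h) hq
          by_cases hI : h ∈ I
          · by_cases hα : α h = σ⁻¹ r
            · rw [← hα]; exact Rα h
            · have hb : backward σ α I h = τ (α h) := by
                rw [backward_mem hI, hF1 (α h) (hαI h hI) hα]
              rw [hb] at hbh
              exact Rtrans (Rα h) (Rtrans (Rτ (α h)) hbh)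
          · by_cases hh : h = σ⁻¹ r
            · exact hh ▸ Rrefl h
            · have hb : backward σ α I h = τ h := by
                rw [backward_not_mem hI, hF1 h hI hh]
              rw [hb] at hbh
              exact Rtrans (Rτ h) hbh
    have hall : ∀ h, R h (σ⁻¹ r) := by
      intro h
      obtain ⟨q, hq0, hq⟩ := hlc h
      obtain ⟨q', rfl⟩ : ∃ q', q = q' + 1 := ⟨q - 1, by omega⟩
      exact key q' h hq
    intro x y
    exact Rtrans (hall x) (Rsymm (hall y))
  · -- (b) orbit count
    unfold numOrbitsOn
    have horb : (fun x : H => {y | y ∈ Set.univ ∧ ∃ k : ℕ, (⇑τ)^[k] x = y}) =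
        fun x : H => {y | τ.SameCycle x y} := by
      funext x
      ext y
      simp only [Set.mem_setOf_eq, Set.mem_univ, true_and]
      constructor
      · rintro ⟨k, hk⟩
        exact ⟨(k : ℤ), by rw [zpow_natCast]; exact hk⟩
      · intro hxy
        obtain ⟨m, -, he⟩ := hxy.exists_pow_eq'
        exact ⟨m, he⟩
    rw [horb]
    have himg : (fun x : H => {y | τ.SameCycle x y}) '' Set.univ =
        (fun x : H => {y | τ.SameCycle x y}) '' (I ∪ {σ⁻¹ r}) := by
      apply Set.Subset.antisymm
      · rintro s ⟨x, -, rfl⟩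
        refine ⟨c x, ?_, ?_⟩
        · rcases c1 x with h | h
          · exact Set.mem_union_left _ h
          · exact Set.mem_union_right _ h
        · ext y
          simp only [Set.mem_setOf_eq]
          exact ⟨fun hy => (c2 x).trans hy, fun hy => (c2 x).symm.trans hy⟩
      · rintro s ⟨x, -, rfl⟩
        exact ⟨x, Set.mem_univ x, rfl⟩
    rw [himg]
    have hinj : Set.InjOn (fun x : H => {y | τ.SameCycle x y}) (I ∪ {σ⁻¹ r}) := by
      intro x hx y hy he
      have hxy : τ.SameCycle x y := by
        have hyy : y ∈ (fun x : H => {z | τ.SameCycle x z}) x := by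
          rw [he]
          exact Equiv.Perm.SameCycle.refl τ y
        exact hyy
      have hcc := c3 x y hxy
      have hcx : c x = x := by
        rcases hx with h | h
        · exact c4 x h
        · rw [Set.eq_of_mem_singleton h]; exact c5
      have hcy : c y = y := by
        rcases hy with h | h
        · exact c4 y h
        · rw [Set.eq_of_mem_singleton h]; exact c5
      rw [← hcx, ← hcy, hcc]
    rw [Set.ncard_image_of_injOn hinj]
    have hIcard : I.ncard = n := by
      have hOI : O.ncard = I.ncard := by
        rw [← hIO]; exact Set.ncard_image_of_injective _ α.injective
      have hdisj' : Disjoint I O := Set.disjoint_iff_inter_eq_empty.mpr hdisj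
      have huniv := Set.ncard_union_eq hdisj' (Set.toFinite I) (Set.toFinite O)
      rw [hpart, Set.ncard_univ, Nat.card_eq_fintype_card, hcard] at huniv
      omega
    rw [Set.ncard_union_eq (Set.disjoint_singleton_right.mpr hsr) (Set.toFinite I)
      (Set.toFinite _), hIcard, Set.ncard_singleton]
  · -- (c)
    intro x y hx hy hxy
    have hcc := c3 x y hxy
    rw [c4 x hx, c4 y hy] at hcc
    exact hcc
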